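/- Let n ≥ 3, let W be the Coxeter group of type H_{n-1}, and let w ∈ W_c be fully commutative. Then no reduced expression for w contains three consecutive internal occurrences of letters. -/

import Mathlib

open CoxeterSystem List LaurentPolynomial

noncomputable section

/-! ### Coxeter systems of types `H` and `B` -/

/-- Symmetric bond function: index `i` corresponds to the generator `s_{i+1}`; the bond
between indices `0`,`1` (i.e. `s₁`,`s₂`) equals `c`, consecutive indices otherwise have
bond `3`, and all other pairs commute. -/
def genM (c i j : ℕ) : ℕ :=
  if i = j then 1
  else if i + 1 = j ∨ j + 1 = i then (if i = 0 ∨ j = 0 then c else 3)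
  else 2

lemma genM_symm (c i j : ℕ) : genM c i j = genM c j i := by
  unfold genM; split_ifs <;> omega

lemma genM_diag (c i : ℕ) : genM c i i = 1 := by unfold genM; simp

lemma genM_ne_one (c i j : ℕ) (hc : 3 ≤ c) (h : i ≠ j) : genM c i j ≠ 1 := by
  unfold genM; split_ifs <;> omega

/-- The Coxeter matrix on `k` generators, with first bond `c` (type `H` for `c = 5`,
type `B` for `c = 4`). -/
def Cmat (c k : ℕ) (hc : 3 ≤ c) : CoxeterMatrix (Fin k) where
  M := Matrix.of fun i j => genM c i j
  isSymm := by ext i j; exact genM_symm c j i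
  diagonal := fun i => genM_diag c i
  off_diagonal := fun i j h => genM_ne_one c i j hc (fun hh => h (Fin.ext hh))

/-- The Coxeter matrix of type `H_k`. -/
abbrev Hmat (k : ℕ) : CoxeterMatrix (Fin k) := Cmat 5 k (by norm_num)

/-- The Coxeter matrix of type `B_k`. -/
abbrev Bmat (k : ℕ) : CoxeterMatrix (Fin k) := Cmat 4 k (by norm_num)

/-- `w` is fully commutative: it has no reduced factorization `w = x₁ ⬝ w_{st} ⬝ x₂`,
where `w_{st}` is the longest element of a rank-2 parabolic subgroup `⟨s,t⟩` with
`m(s,t) ≥ 3`. -/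
def FC {B : Type*} {W : Type*} [Group W] {M : CoxeterMatrix B} (cs : CoxeterSystem M W)
    (w : W) : Prop :=
  ¬ ∃ (x₁ x₂ : W) (i j : B), 3 ≤ M i j ∧
      w = x₁ * cs.wordProd (alternatingWord i j (M i j)) * x₂ ∧
      cs.length w = cs.length x₁ + cs.length (cs.wordProd (alternatingWord i j (M i j)))
        + cs.length x₂

/-- Bruhat–Chevalley order: some reduced expression for `w` contains a subword which is a
reduced expression for `x`. -/
def BruhatLE {B : Type*} {W : Type*} [Group W] {M : CoxeterMatrix B}
    (cs : CoxeterSystem M W) (x w : W) : Prop :=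
  ∃ ω ω' : List B, cs.IsReduced ω ∧ cs.wordProd ω = w ∧
    ω'.Sublist ω ∧ cs.IsReduced ω' ∧ cs.wordProd ω' = x

/-! ### Commutations acting on occurrences of letters -/

variable {B : Type*}

/-- One commutation move: swap the letters in positions `k` and `k+1`, which must commute. -/
def SwapStep (M : CoxeterMatrix B) (ω ω' : List B) (k : ℕ) : Prop :=
  ∃ a b : B, ω[k]? = some a ∧ ω[k+1]? = some b ∧ M a b = 2 ∧
    ω' = (ω.set k b).set (k+1) a

/-- Effect of the swap at position `k` on a tracked position. -/
def swapAt (k p : ℕ) : ℕ := if p = k then k + 1 else if p = k + 1 then k else p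

/-- A sequence of commutation moves, together with the induced map on positions
(tracking occurrences of letters). -/
inductive CommPath (M : CoxeterMatrix B) : List B → List B → (ℕ → ℕ) → Prop
  | refl (ω : List B) : CommPath M ω ω id
  | step {ω ω' ω'' : List B} {f : ℕ → ℕ} {k : ℕ} :
      CommPath M ω ω' f → SwapStep M ω' ω'' k → CommPath M ω ω'' (swapAt k ∘ f)

/-- The occurrence at position `p` of `ω` is internal: after commutations it is the middle
term of a consecutive subsequence `s_q s_p s_q` with `m(s_p, s_q) ≥ 3`. -/
def Internal (M : CoxeterMatrix B) (ω : List B) (p : ℕ) : Prop :=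
  ∃ (ω' : List B) (f : ℕ → ℕ) (a q : B), CommPath M ω ω' f ∧ 1 ≤ f p ∧
    ω'[f p]? = some a ∧ ω'[f p - 1]? = some q ∧ ω'[f p + 1]? = some q ∧ 3 ≤ M a q

/-- The occurrence at position `p` of `ω` is lateral with respect to the internal
occurrence at position `r`. -/
def LateralWrt (M : CoxeterMatrix B) (ω : List B) (p r : ℕ) : Prop :=
  ¬ Internal M ω p ∧ Internal M ω r ∧
    ∃ (ω' : List B) (f : ℕ → ℕ) (a q : B), CommPath M ω ω' f ∧
      (f p + 1 = f r ∨ f p = f r + 1) ∧ 1 ≤ f r ∧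
      ω'[f r]? = some q ∧ ω'[f r - 1]? = some a ∧ ω'[f r + 1]? = some a ∧
      ω'[f p]? = some a ∧ 3 ≤ M a q

/-- Lateral occurrence. -/
def Lateral (M : CoxeterMatrix B) (ω : List B) (p : ℕ) : Prop := ∃ r, LateralWrt M ω p r

/-- Bilateral occurrence: lateral with respect to two different internal occurrences. -/
def Bilateral (M : CoxeterMatrix B) (ω : List B) (p : ℕ) : Prop :=
  ∃ r₁ r₂, r₁ ≠ r₂ ∧ LateralWrt M ω p r₁ ∧ LateralWrt M ω p r₂

/-- The occurrence at position `p` is internal and lies in the set `R`: after commutations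
it occurs in a subsequence `t s t` whose rightmost occurrence of `t` is bilateral. -/
def InRSet (M : CoxeterMatrix B) (ω : List B) (p : ℕ) : Prop :=
  Internal M ω p ∧
    ∃ (ω' : List B) (f : ℕ → ℕ) (r : ℕ) (a q : B), CommPath M ω ω' f ∧
      f r = f p + 1 ∧ 1 ≤ f p ∧
      ω'[f p]? = some q ∧ ω'[f p - 1]? = some a ∧ ω'[f p + 1]? = some a ∧ 3 ≤ M q a ∧
      Bilateral M ω r

/-- A word is right justified if every occurrence in `R` has the letter immediately to its
left lateral or internal, and every internal occurrence not in `R` has the letters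
immediately to its left and right lateral or internal. -/
def RightJustified (M : CoxeterMatrix B) (ω : List B) : Prop :=
  ∀ p : ℕ,
    (InRSet M ω p → 1 ≤ p ∧ (Lateral M ω (p-1) ∨ Internal M ω (p-1))) ∧
    (Internal M ω p → ¬ InRSet M ω p →
      1 ≤ p ∧ p + 1 < ω.length ∧ (Lateral M ω (p-1) ∨ Internal M ω (p-1)) ∧
      (Lateral M ω (p+1) ∨ Internal M ω (p+1)))

/-- A bad occurrence of `s₂` (Remark 3.1.11): a lateral occurrence which after commutations
appears as the overscored letter in `s₃ s₁ s₂ s₁ s̄₂ s₃` or `s₃ s̄₂ s₁ s₂ s₁ s₃`. -/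
def BadOcc (M : CoxeterMatrix B) (s1 s2 : B) (ω : List B) (p : ℕ) : Prop :=
  Lateral M ω p ∧
    ∃ (ω' : List B) (f : ℕ → ℕ) (s3 : B) (u v : List B), CommPath M ω ω' f ∧ M s2 s3 = 3 ∧
      ((ω' = u ++ [s3, s1, s2, s1, s2, s3] ++ v ∧ f p = u.length + 4) ∨
       (ω' = u ++ [s3, s2, s1, s2, s1, s3] ++ v ∧ f p = u.length + 1))

/-! ### Blocks for the canonical decomposition of Lemma 3.2.5 -/

/-- Blocks: a plain generator, or one of the six forms of maximal contiguous subsequences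
of internal and lateral letters. -/
inductive Blk (B : Type*) where
  | gen (i : B)
  | f1 | f2 | f3 | f4 | f5 | f6

namespace Blk

/-- The underlying word of a block (`s1`, `s2` are the first two Coxeter generators). -/
def word (s1 s2 : B) : Blk B → List B
  | .gen i => [i]
  | .f1 => [s1, s2]
  | .f2 => [s1, s2, s1]
  | .f3 => [s2, s1, s2]
  | .f4 => [s1, s2, s1, s2]
  | .f5 => [s2, s1, s2]
  | .f6 => [s2, s1, s2, s1]

/-- The positions within each block that are internal. -/
def internalPos : Blk B → List ℕ
  | .gen _ => []
  | .f1 => [1]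
  | .f2 => [1]
  | .f3 => [1]
  | .f4 => [1, 2]
  | .f5 => [1, 2]
  | .f6 => [1, 2]

def isGen : Blk B → Prop
  | .gen _ => True
  | _ => False

/-- Blocks allowed in type `B`: only the forms (1), (2), (3). -/
def isBForm : Blk B → Prop
  | .gen _ => True
  | .f1 => True
  | .f2 => True
  | .f3 => True
  | _ => False

/-- The element of the Temperley–Lieb algebra associated to a block (Definition 3.2.6). -/
def elt {R : Type*} [Ring R] (b1 b2 : R) (g : B → R) : Blk B → R
  | .gen i => g i
  | .f1 => b1 * b2 - 1
  | .f2 => b1 * b2 * b1 - b1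
  | .f3 => b2 * b1 * b2 - b2
  | .f4 => b1 * b2 * b1 * b2 - 2 * (b1 * b2)
  | .f5 => b2 * b1 * b2 - 2 * b2
  | .f6 => b2 * b1 * b2 * b1 - 2 * (b2 * b1)

end Blk

/-- The word spelled by a list of blocks. -/
def blocksWord (s1 s2 : B) (bl : List (Blk B)) : List B :=
  (bl.map (Blk.word s1 s2)).flatten

/-- `bl` is a decomposition of `w ∈ W_c` as in Lemma 3.2.5: the word spelled by the blocks
is a reduced expression for `w` (right justified when `rj = true`), all blocks satisfy `ok`,
the form blocks are maximal (no two adjacent), the occurrences in generator blocks are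
neither internal nor lateral, and within the form blocks the internal occurrences are
exactly the designated ones and all others are lateral. -/
def IsDecomp {W : Type*} [Group W] {M : CoxeterMatrix B} (cs : CoxeterSystem M W)
    (s1 s2 : B) (rj : Bool) (ok : Blk B → Prop) (w : W) (bl : List (Blk B)) : Prop :=
  cs.IsReduced (blocksWord s1 s2 bl) ∧ cs.wordProd (blocksWord s1 s2 bl) = w ∧
  (rj = true → RightJustified M (blocksWord s1 s2 bl)) ∧
  (∀ b ∈ bl, ok b) ∧
  (∀ (j : ℕ) (b b' : Blk B), bl[j]? = some b → bl[j+1]? = some b' → b.isGen ∨ b'.isGen) ∧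
  (∀ (j : ℕ) (b : Blk B) (t : ℕ), bl[j]? = some b → t < (Blk.word s1 s2 b).length →
    (Internal M (blocksWord s1 s2 bl) ((blocksWord s1 s2 (bl.take j)).length + t)
        ↔ t ∈ b.internalPos) ∧
    (Lateral M (blocksWord s1 s2 bl) ((blocksWord s1 s2 (bl.take j)).length + t)
        ↔ (¬ b.isGen ∧ t ∉ b.internalPos)))

/-! ### The generalized Temperley–Lieb algebras -/

/-- The ground ring `A = ℤ[v,v⁻¹]`. -/
abbrev LA : Type := LaurentPolynomial ℤ

/-- `v`. -/
def vv : LA := T 1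

/-- `v⁻¹`. -/
def vinv : LA := T (-1)

/-- `δ = v + v⁻¹`. -/
def δδ : LA := vv + vinv

/-- A Laurent polynomial lies in `ℕ[v, v⁻¹]`, i.e. has non-negative coefficients. -/
def IsNonnegLP (p : LA) : Prop := ∀ z : ℤ, 0 ≤ AddMonoidAlgebra.coeff p z

/-- Defining relations for the generalized Temperley–Lieb algebra; `c = 5` gives type `H`
and `c = 4` gives type `B`.  Generator index `i` corresponds to `b_{i+1}`. -/
inductive TLrel (c k : ℕ) : FreeAlgebra LA (Fin k) → FreeAlgebra LA (Fin k) → Prop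
  | sq (i : Fin k) : TLrel c k (.ι LA i * .ι LA i) (δδ • .ι LA i)
  | comm (i j : Fin k) (h : (i:ℕ) + 1 < j ∨ (j:ℕ) + 1 < i) :
      TLrel c k (.ι LA i * .ι LA j) (.ι LA j * .ι LA i)
  | braid (i j : Fin k) (h : (i:ℕ) + 1 = j ∨ (j:ℕ) + 1 = i) (hi : 1 ≤ (i:ℕ)) (hj : 1 ≤ (j:ℕ)) :
      TLrel c k (.ι LA i * .ι LA j * .ι LA i) (.ι LA i)
  | hrel (i j : Fin k) (h : ((i:ℕ) = 0 ∧ (j:ℕ) = 1) ∨ ((i:ℕ) = 1 ∧ (j:ℕ) = 0)) (hc : c = 5) :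
      TLrel c k (.ι LA i * .ι LA j * .ι LA i * .ι LA j * .ι LA i)
        ((3 : LA) • (.ι LA i * .ι LA j * .ι LA i) - .ι LA i)
  | brel (i j : Fin k) (h : ((i:ℕ) = 0 ∧ (j:ℕ) = 1) ∨ ((i:ℕ) = 1 ∧ (j:ℕ) = 0)) (hc : c = 4) :
      TLrel c k (.ι LA i * .ι LA j * .ι LA i * .ι LA j) ((2 : LA) • (.ι LA i * .ι LA j))

/-- The generalized Temperley–Lieb algebra (type `H` for `c = 5`, type `B` for `c = 4`). -/
abbrev TL (c k : ℕ) : Type := RingQuot (TLrel c k)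

/-- The generator `b_{i+1}` of `TL c k`. -/
def bgen (c k : ℕ) (i : Fin k) : TL c k := RingQuot.mkAlgHom LA _ (FreeAlgebra.ι LA i)

/-- The monomial `b_{i_1} ⋯ b_{i_l}` attached to a word. -/
def bword (c k : ℕ) (ω : List (Fin k)) : TL c k := (ω.map (bgen c k)).prod

/-- The element `t̃ONE = (b_{i_1} - v⁻¹) ⋯ (b_{i_l} - v⁻¹)` attached to a word. -/
def tword (c k : ℕ) (ω : List (Fin k)) : TL c k :=
  (ω.map (fun i => bgen c k i - algebraMap LA (TL c k) vinv)).prod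

/-- The product of the Temperley–Lieb elements of a list of blocks (giving `f_w` when the
blocks form a decomposition of `w` as in Lemma 3.2.5). -/
def blocksElt (c k : ℕ) (bl : List (Blk (Fin k))) (h1 h2 : Fin k) : TL c k :=
  (bl.map (Blk.elt (bgen c k h1) (bgen c k h2) (bgen c k))).prod

/-- `r` assigns to every element satisfying `P` (e.g. every fully commutative element)
a reduced expression. -/
def IsRedChoice {W : Type*} [Group W] {M : CoxeterMatrix B} (cs : CoxeterSystem M W)
    (P : W → Prop) (r : W → List B) : Prop :=
  ∀ w : W, P w → cs.IsReduced (r w) ∧ cs.wordProd (r w) = w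

/-- The `ℤ[v⁻¹]`-lattice spanned by the elements `gen (r w)`, for `w` satisfying `P`;
realized as the `ℤ`-span of all the `v⁻ʲ`-multiples of these elements. -/
def Latt {W : Type*} (c k : ℕ) (P : W → Prop) (r : W → List (Fin k))
    (gen : List (Fin k) → TL c k) : Submodule ℤ (TL c k) :=
  Submodule.span ℤ {x : TL c k | ∃ (j : ℕ) (w : W), P w ∧ x = (T (-(j:ℤ)) : LA) • gen (r w)}

/-- `bar` is a bar involution: a ring homomorphism fixing each generator `b_i` and acting
on scalars by `v ↦ v⁻¹`. -/
def IsBar (c k : ℕ) (bar : TL c k →+* TL c k) : Prop :=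
  (∀ i : Fin k, bar (bgen c k i) = bgen c k i) ∧
  (∀ m : ℤ, bar (algebraMap LA (TL c k) (T m)) = algebraMap LA (TL c k) (T (-m)))

/-! ### Auxiliary lemmas -/
section AuxProof

open List

variable {B : Type*} {W : Type*} [Group W] {M : CoxeterMatrix B} (cs : CoxeterSystem M W)

lemma simple_comm_of_two {i j : B} (h : M i j = 2) :
    cs.simple i * cs.simple j = cs.simple j * cs.simple i := by
  have hp := cs.simple_mul_simple_pow i j
  rw [h, pow_two] at hp
  have h2 : cs.simple i * cs.simple j = (cs.simple i * cs.simple j)⁻¹ := by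
    rw [eq_inv_iff_mul_eq_one]; exact hp
  rw [h2, mul_inv_rev, cs.inv_simple, cs.inv_simple]

lemma split_at {α : Type*} {l : List α} {k : ℕ} {x : α} (h : l[k]? = some x) :
    l = l.take k ++ x :: l.drop (k+1) := by
  obtain ⟨hk, hx⟩ := List.getElem?_eq_some_iff.mp h
  conv_lhs => rw [← List.take_append_drop k l]
  rw [List.drop_eq_getElem_cons hk, hx]

lemma swapAt_invol (k p : ℕ) : swapAt k (swapAt k p) = p := by
  unfold _root_.swapAt; split_ifs <;> omega

lemma commPath_inv {ω ω' : List B} {f : ℕ → ℕ} (h : CommPath M ω ω' f) :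
    ∃ g : ℕ → ℕ, (∀ x, g (f x) = x) ∧ (∀ y, f (g y) = y) := by
  induction h with
  | refl => exact ⟨id, fun _ => rfl, fun _ => rfl⟩
  | @step ω₁ ω₂ f k _ _ ih =>
    obtain ⟨g, hg1, hg2⟩ := ih
    refine ⟨g ∘ swapAt k, fun x => ?_, fun y => ?_⟩
    · simp only [Function.comp_apply, swapAt_invol]; exact hg1 x
    · simp only [Function.comp_apply]; rw [hg2 (swapAt k y), swapAt_invol]

lemma swapStep_getElem {ω ω' : List B} {k : ℕ} (h : SwapStep M ω ω' k) (y : ℕ) :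
    ω'[swapAt k y]? = ω[y]? := by
  obtain ⟨a, b, hka, hkb, hM, rfl⟩ := h
  have hk1 : k + 1 < ω.length := (List.getElem?_eq_some_iff.mp hkb).1
  unfold _root_.swapAt
  split_ifs with h1 h2
  · subst h1
    rw [List.getElem?_set, if_pos rfl, if_pos (by simp; omega), hka]
  · subst h2
    rw [List.getElem?_set, if_neg (by omega), List.getElem?_set, if_pos rfl,
      if_pos (by omega : k < ω.length), hkb]
  · rw [List.getElem?_set, if_neg (by omega), List.getElem?_set, if_neg (by omega)]

lemma swapStep_length {ω ω' : List B} {k : ℕ} (h : SwapStep M ω ω' k) :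
    ω'.length = ω.length := by
  obtain ⟨a, b, _, _, _, rfl⟩ := h; simp

lemma commPath_getElem {ω ω' : List B} {f : ℕ → ℕ} (h : CommPath M ω ω' f) (y : ℕ) :
    ω'[f y]? = ω[y]? := by
  induction h with
  | refl => rfl
  | @step ω₁ ω₂ f k _ hs ih =>
    simpa [Function.comp_apply, swapStep_getElem hs (f y)] using ih

lemma commPath_length {ω ω' : List B} {f : ℕ → ℕ} (h : CommPath M ω ω' f) :
    ω'.length = ω.length := by
  induction h with
  | refl => rfl
  | @step ω₁ ω₂ f k _ hs ih => rw [swapStep_length hs, ih]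

end AuxProof
section AuxProof2

open List CoxeterSystem

variable {B : Type*} {W : Type*} [Group W] {M : CoxeterMatrix B} (cs : CoxeterSystem M W)

lemma wordProd_swap (l : List B) (k : ℕ) (a b : B)
    (ha : l[k]? = some a) (hb : l[k+1]? = some b)
    (hcomm : cs.simple a * cs.simple b = cs.simple b * cs.simple a) :
    cs.wordProd ((l.set k b).set (k+1) a) = cs.wordProd l := by
  induction l generalizing k with
  | nil => simp at ha
  | cons x t ih =>
    cases k with
    | zero =>
      simp only [List.getElem?_cons_zero, Option.some_inj] at ha
      cases t with
      | nil => simp at hb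
      | cons y t' =>
        simp only [List.getElem?_cons_succ, List.getElem?_cons_zero, Option.some_inj] at hb
        rw [ha, hb]
        show cs.wordProd (b :: a :: t') = cs.wordProd (a :: b :: t')
        rw [cs.wordProd_cons, cs.wordProd_cons, cs.wordProd_cons, cs.wordProd_cons,
          ← mul_assoc, ← mul_assoc, hcomm]
    | succ k =>
      simp only [List.getElem?_cons_succ] at ha hb
      show cs.wordProd (x :: ((t.set k b).set (k+1) a)) = cs.wordProd (x :: t)
      rw [cs.wordProd_cons, cs.wordProd_cons, ih k ha hb]

lemma commPath_wordProd {ω ω' : List B} {f : ℕ → ℕ} (h : CommPath M ω ω' f) :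
    cs.wordProd ω' = cs.wordProd ω := by
  induction h with
  | refl => rfl
  | @step ω₁ ω₂ f k _ hs ih =>
    obtain ⟨a, b, hka, hkb, hM, rfl⟩ := hs
    rw [wordProd_swap cs ω₁ k a b hka hkb (simple_comm_of_two cs hM), ih]

lemma commPath_order {ω ω' : List B} {f : ℕ → ℕ} (h : CommPath M ω ω' f) :
    ∀ x y cx cy, ω[x]? = some cx → ω[y]? = some cy → M cx cy ≠ 2 → x < y → f x < f y := by
  induction h with
  | refl => intro x y _ _ _ _ _ hxy; exact hxy
  | @step ω₁ ω₂ f k hpath hs ih =>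
    intro x y cx cy hx hy hM hxy
    have h1 := ih x y cx cy hx hy hM hxy
    have hx1 : ω₁[f x]? = some cx := by rw [commPath_getElem hpath x]; exact hx
    have hy1 : ω₁[f y]? = some cy := by rw [commPath_getElem hpath y]; exact hy
    obtain ⟨a, b, hka, hkb, hab, _⟩ := hs
    show swapAt k (f x) < swapAt k (f y)
    by_cases hc : f x = k ∧ f y = k + 1
    · exfalso
      rw [hc.1] at hx1; rw [hc.2] at hy1
      rw [hka] at hx1; rw [hkb] at hy1
      obtain rfl : a = cx := by simpa using hx1
      obtain rfl : b = cy := by simpa using hy1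
      exact hM hab
    · unfold _root_.swapAt; split_ifs <;> omega

end AuxProof2
section AuxProof3

open List CoxeterSystem

variable {B : Type*} {W : Type*} [Group W] {M : CoxeterMatrix B} (cs : CoxeterSystem M W)

lemma genM5_three_or_five {i j : ℕ} (h : 3 ≤ genM 5 i j) :
    genM 5 i j = 3 ∨ (genM 5 i j = 5 ∧ ((i = 0 ∧ j = 1) ∨ (i = 1 ∧ j = 0))) := by
  unfold genM at *; split_ifs at * <;> omega

lemma genM5_five {i j : ℕ} (h : (i = 0 ∧ j = 1) ∨ (i = 1 ∧ j = 0)) : genM 5 i j = 5 := by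
  unfold genM; split_ifs <;> omega

lemma not_FC_of_braid {u v : List B} {i j : B} (h3 : 3 ≤ M i j)
    (hred : cs.IsReduced (u ++ alternatingWord i j (M i j) ++ v)) :
    ¬ FC cs (cs.wordProd (u ++ alternatingWord i j (M i j) ++ v)) := by
  intro hfc
  apply hfc
  set aw := alternatingWord i j (M i j) with haw
  set m := cs.wordProd aw with hm
  set w := cs.wordProd (u ++ aw ++ v) with hwdef
  have hweq : w = cs.wordProd u * m * cs.wordProd v := by
    rw [hwdef, cs.wordProd_append, cs.wordProd_append, mul_assoc]
  refine ⟨cs.wordProd u, cs.wordProd v, i, j, h3, hweq, ?_⟩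
  have l1 : cs.length (cs.wordProd u) ≤ u.length := cs.length_wordProd_le u
  have l2 : cs.length m ≤ M i j := by
    have := cs.length_wordProd_le aw
    rwa [haw, CoxeterSystem.length_alternatingWord] at this
  have l3 : cs.length (cs.wordProd v) ≤ v.length := cs.length_wordProd_le v
  have l4 : cs.length w ≤ cs.length (cs.wordProd u) + cs.length m + cs.length (cs.wordProd v) := by
    rw [hweq]
    calc cs.length (cs.wordProd u * m * cs.wordProd v)
        ≤ cs.length (cs.wordProd u * m) + cs.length (cs.wordProd v) := cs.length_mul_le _ _
      _ ≤ cs.length (cs.wordProd u) + cs.length m + cs.length (cs.wordProd v) := by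
          have := cs.length_mul_le (cs.wordProd u) m; omega
  have l5 : cs.length w = u.length + M i j + v.length := by
    have := hred
    unfold CoxeterSystem.IsReduced at this
    rw [← hwdef] at this
    rw [this]
    simp [haw, CoxeterSystem.length_alternatingWord]
    omega
  rw [← haw, ← hm]
  omega

lemma not_adjacent_eq {ω : List B} (hred : cs.IsReduced ω) {x : ℕ} {s : B}
    (h1 : ω[x]? = some s) (h2 : ω[x+1]? = some s) : False := by
  have hx1 : x + 1 < ω.length := (List.getElem?_eq_some_iff.mp h2).1
  have hd1 : ω.drop (x+1) = s :: ω.drop (x+2) := by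
    have h0 : (ω.drop (x+1))[0]? = some s := by
      rw [List.getElem?_drop]; simpa using h2
    have := split_at h0
    simpa [List.drop_drop] using this
  have hdec : ω = ω.take x ++ s :: s :: ω.drop (x+2) := by
    have := split_at h1
    rwa [hd1] at this
  have hpeq : cs.wordProd ω = cs.wordProd (ω.take x ++ ω.drop (x+2)) := by
    conv_lhs => rw [hdec]
    rw [cs.wordProd_append, cs.wordProd_append, cs.wordProd_cons, cs.wordProd_cons,
      cs.simple_mul_simple_cancel_left]
  have hle := cs.length_wordProd_le (ω.take x ++ ω.drop (x+2))
  rw [← hpeq] at hle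
  unfold CoxeterSystem.IsReduced at hred
  rw [hred] at hle
  simp only [List.length_append, List.length_take, List.length_drop] at hle
  omega

end AuxProof3
section AuxProof4

open List CoxeterSystem

lemma extract {k : ℕ} {W : Type*} [Group W] (cs : CoxeterSystem (Hmat k) W) {w : W}
    (hw : FC cs w) {ω : List (Fin k)} (hred : cs.IsReduced ω) (hprod : cs.wordProd ω = w)
    {p : ℕ} (hint : Internal (Hmat k) ω p) :
    ∃ (a b : Fin k) (u v : ℕ), ω[p]? = some a ∧ ω[u]? = some b ∧ ω[v]? = some b ∧
      u < p ∧ p < v ∧ (((a:ℕ) = 0 ∧ (b:ℕ) = 1) ∨ ((a:ℕ) = 1 ∧ (b:ℕ) = 0)) ∧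
      ∀ x c, u < x → x < v → x ≠ p → ω[x]? = some c → (Hmat k) c b = 2 := by
  obtain ⟨ω₁, f, a, q, hpath, hfp, ha, hql, hqr, hM⟩ := hint
  have hget := commPath_getElem hpath
  have hωp : ω[p]? = some a := by rw [← hget p]; exact ha
  have hM' : 3 ≤ genM 5 (a:ℕ) (q:ℕ) := hM
  rcases genM5_three_or_five hM' with h3 | ⟨h5, hvals⟩
  · exfalso
    have hprod1 : cs.wordProd ω₁ = w := by rw [commPath_wordProd cs hpath, hprod]
    have hlen1 : ω₁.length = ω.length := commPath_length hpath
    have hred1 : cs.IsReduced ω₁ := by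
      unfold CoxeterSystem.IsReduced at *
      rw [hprod1, hlen1, ← hprod]; exact hred
    have h1 : ω₁ = ω₁.take (f p - 1) ++ q :: ω₁.drop (f p) := by
      have := split_at hql
      rwa [show f p - 1 + 1 = f p by omega] at this
    have h2 : ω₁.drop (f p) = a :: ω₁.drop (f p + 1) := by
      have h0 : (ω₁.drop (f p))[0]? = some a := by rw [List.getElem?_drop]; simpa using ha
      simpa [List.drop_drop] using split_at h0
    have h3' : ω₁.drop (f p + 1) = q :: ω₁.drop (f p + 2) := by
      have h0 : (ω₁.drop (f p + 1))[0]? = some q := by rw [List.getElem?_drop]; simpa using hqr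
      simpa [List.drop_drop] using split_at h0
    have hAW : alternatingWord a q ((Hmat k) a q) = [q, a, q] := by
      rw [show ((Hmat k) a q) = 3 from h3]
      rfl
    have hdec : ω₁ = ω₁.take (f p - 1) ++ alternatingWord a q ((Hmat k) a q)
        ++ ω₁.drop (f p + 2) := by
      rw [hAW]
      conv_lhs => rw [h1, h2, h3']
      simp
    refine not_FC_of_braid cs (u := ω₁.take (f p - 1)) (v := ω₁.drop (f p + 2))
        (show (3:ℕ) ≤ (Hmat k) a q from hM) ?_ ?_
    · rw [← hdec]; exact hred1
    · rw [← hdec, hprod1]; exact hw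
  · obtain ⟨g, hg1, hg2⟩ := commPath_inv hpath
    set u := g (f p - 1) with hu
    set v := g (f p + 1) with hv
    have hfu : f u = f p - 1 := hg2 _
    have hfv : f v = f p + 1 := hg2 _
    have hωu : ω[u]? = some q := by rw [← hget u, hfu]; exact hql
    have hωv : ω[v]? = some q := by rw [← hget v, hfv]; exact hqr
    have hMaq : (Hmat k) a q ≠ 2 := show genM 5 (a:ℕ) (q:ℕ) ≠ 2 by omega
    have hMqa : (Hmat k) q a ≠ 2 := by
      show genM 5 (q:ℕ) (a:ℕ) ≠ 2; rw [genM_symm]; omega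
    have hup : u < p := by
      rcases Nat.lt_trichotomy u p with h | h | h
      · exact h
      · exfalso; rw [h] at hfu; omega
      · exfalso; have := commPath_order hpath p u a q hωp hωu hMaq h; omega
    have hpv : p < v := by
      rcases Nat.lt_trichotomy p v with h | h | h
      · exact h
      · exfalso; rw [← h] at hfv; omega
      · exfalso; have := commPath_order hpath v p q a hωv hωp hMqa h; omega
    refine ⟨a, q, u, v, hωp, hωu, hωv, hup, hpv, hvals, ?_⟩
    intro x c hux hxv hxp hxc
    by_contra h2
    have hMqc : (Hmat k) q c ≠ 2 := by
      show genM 5 (q:ℕ) (c:ℕ) ≠ 2; rw [genM_symm]; exact h2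
    have o1 := commPath_order hpath u x q c hωu hxc hMqc hux
    have o2 := commPath_order hpath x v c q hxc hωv h2 hxv
    have hfx : f x = f p := by omega
    have : x = p := by rw [← hg1 x, hfx, hg1 p]
    exact hxp this

end AuxProof4
/-- Lemma 3.2.2(ii): no reduced expression for a fully commutative element
contains three consecutive internal occurrences of letters. -/
theorem stmt_2 (n : ℕ) (hn : 3 ≤ n) (W : Type) [Group W]
    (cs : CoxeterSystem (Hmat (n-1)) W) (w : W) (hw : FC cs w)
    (ω : List (Fin (n-1))) (hred : cs.IsReduced ω) (hprod : cs.wordProd ω = w)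
    (p : ℕ) :
    ¬ (Internal (Hmat (n-1)) ω p ∧ Internal (Hmat (n-1)) ω (p+1) ∧
        Internal (Hmat (n-1)) ω (p+2)) := by
  rintro ⟨hi0, hi1, hi2⟩
  obtain ⟨a, b, u, u', hpa, hub, hu'b, hu_lt, hu'_gt, hvals, hmidP⟩ :=
    extract cs hw hred hprod hi0
  obtain ⟨a1, b1, v, v', hp1a1, hvb1, hv'b1, hv_lt, hv'_gt, hvals1, hmidV⟩ :=
    extract cs hw hred hprod hi1
  obtain ⟨a2, b2, t, t', hp2a2, htb2, ht'b2, ht_lt, ht'_gt, hvals2, hmidQ⟩ :=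
    extract cs hw hred hprod hi2
  -- adjacent letters in a reduced word are distinct
  have hne01 : a ≠ a1 := by rintro rfl; exact not_adjacent_eq cs hred hpa hp1a1
  have hne12 : a1 ≠ a2 := by
    rintro rfl
    exact not_adjacent_eq cs hred hp1a1 (by exact hp2a2)
  have hv01 : (a:ℕ) ≠ (a1:ℕ) := fun h => hne01 (Fin.ext h)
  have hv12 : (a1:ℕ) ≠ (a2:ℕ) := fun h => hne12 (Fin.ext h)
  have ha1b : a1 = b := Fin.ext (by omega)
  have ha2a : a2 = a := Fin.ext (by omega)
  have hb2b : b2 = b := Fin.ext (by omega)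
  rw [ha1b] at hp1a1
  rw [ha2a] at hp2a2
  rw [hb2b] at ht'b2 hmidQ
  -- decomposition of ω
  have h1 : ω = ω.take u ++ b :: ω.drop (u+1) := split_at hub
  have h2 : ω.drop (u+1) = (ω.drop (u+1)).take (p-u-1) ++ a :: ω.drop (p+1) := by
    have hip : (ω.drop (u+1))[p-u-1]? = some a := by
      rw [List.getElem?_drop, show u+1+(p-u-1) = p by omega]; exact hpa
    have h := split_at hip
    rwa [List.drop_drop, show (u+1)+(p-u-1+1) = p+1 by omega] at h
  have h3 : ω.drop (p+1) = b :: ω.drop (p+2) := by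
    have h0 : (ω.drop (p+1))[0]? = some b := by
      rw [List.getElem?_drop]; simpa using hp1a1
    simpa [List.drop_drop] using split_at h0
  have h4 : ω.drop (p+2) = a :: ω.drop (p+3) := by
    have h0 : (ω.drop (p+2))[0]? = some a := by
      rw [List.getElem?_drop]; simpa using hp2a2
    simpa [List.drop_drop] using split_at h0
  have h5 : ω.drop (p+3) = (ω.drop (p+3)).take (t'-(p+3)) ++ b :: ω.drop (t'+1) := by
    have hit : (ω.drop (p+3))[t'-(p+3)]? = some b := by
      rw [List.getElem?_drop, show p+3+(t'-(p+3)) = t' by omega]; exact ht'b2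
    have h := split_at hit
    rwa [List.drop_drop, show (p+3)+(t'-(p+3)+1) = t'+1 by omega] at h
  have hdec := h1
  rw [h2, h3, h4, h5] at hdec
  -- commuting letters
  have hCc : ∀ c ∈ (ω.drop (u+1)).take (p-u-1), (Hmat (n-1)) c b = 2 := by
    intro c hc
    obtain ⟨i, hi⟩ := List.mem_iff_getElem?.mp hc
    have hilen : i < p - u - 1 := by
      have h := (List.getElem?_eq_some_iff.mp hi).1
      simp only [List.length_take, List.length_drop] at h
      omega
    have hωx : ω[u+1+i]? = some c := by
      rw [← List.getElem?_drop, ← List.getElem?_take_of_lt hilen]; exact hi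
    exact hmidP (u+1+i) c (by omega) (by omega) (by omega) hωx
  have hDc : ∀ c ∈ (ω.drop (p+3)).take (t'-(p+3)), (Hmat (n-1)) c b = 2 := by
    intro c hc
    obtain ⟨i, hi⟩ := List.mem_iff_getElem?.mp hc
    have hilen : i < t' - (p+3) := by
      have h := (List.getElem?_eq_some_iff.mp hi).1
      simp only [List.length_take, List.length_drop] at h
      omega
    have hωx : ω[p+3+i]? = some c := by
      rw [← List.getElem?_drop, ← List.getElem?_take_of_lt hilen]; exact hi
    exact hmidQ (p+3+i) c (by omega) (by omega) (by omega) hωx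
  set A := ω.take u with hA
  set C := (ω.drop (u+1)).take (p-u-1) with hC
  set D := (ω.drop (p+3)).take (t'-(p+3)) with hD
  set E := ω.drop (t'+1) with hE
  have hCb : cs.simple b * cs.wordProd C = cs.wordProd C * cs.simple b := by
    refine Commute.list_prod_right _ _ ?_
    intro g hg
    obtain ⟨c, hc, rfl⟩ := List.mem_map.mp hg
    have h2c : (Hmat (n-1)) b c = 2 := by
      have := hCc c hc
      show genM 5 (b:ℕ) (c:ℕ) = 2; rw [genM_symm]; exact this
    exact simple_comm_of_two cs h2c
  have hDb : cs.simple b * cs.wordProd D = cs.wordProd D * cs.simple b := by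
    refine Commute.list_prod_right _ _ ?_
    intro g hg
    obtain ⟨c, hc, rfl⟩ := List.mem_map.mp hg
    have h2c : (Hmat (n-1)) b c = 2 := by
      have := hDc c hc
      show genM 5 (b:ℕ) (c:ℕ) = 2; rw [genM_symm]; exact this
    exact simple_comm_of_two cs h2c
  have hab5 : (Hmat (n-1)) a b = 5 := genM5_five hvals
  have hAW : alternatingWord a b ((Hmat (n-1)) a b) = [b,a,b,a,b] := by
    rw [show ((Hmat (n-1)) a b) = 5 from hab5]; rfl
  have hprodeq : cs.wordProd ((A ++ C) ++ alternatingWord a b ((Hmat (n-1)) a b) ++ (D ++ E))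
      = cs.wordProd ω := by
    rw [hAW]
    conv_rhs => rw [hdec]
    simp only [CoxeterSystem.wordProd_append, CoxeterSystem.wordProd_cons,
      CoxeterSystem.wordProd_nil, mul_one, mul_assoc]
    congr 1
    rw [← mul_assoc, ← hCb, mul_assoc]
    congr 5
    rw [← mul_assoc, hDb, mul_assoc]
  have hlenstar : ((A ++ C) ++ alternatingWord a b ((Hmat (n-1)) a b) ++ (D ++ E)).length
      = ω.length := by
    have hl := congrArg List.length hdec
    simp only [List.length_append, List.length_cons] at hl
    simp only [List.length_append, hAW, List.length_cons, List.length_nil]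
    omega
  have hredstar : cs.IsReduced ((A ++ C) ++ alternatingWord a b ((Hmat (n-1)) a b) ++ (D ++ E)) := by
    unfold CoxeterSystem.IsReduced at *
    rw [hprodeq, hlenstar]; exact hred
  refine not_FC_of_braid cs (u := A ++ C) (v := D ++ E)
    (show (3:ℕ) ≤ (Hmat (n-1)) a b by rw [hab5]; norm_num) hredstar ?_
  rw [hprodeq, hprod]; exact hw
end
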